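/- Let f be a nonconstant complex polynomial, c ∈ ℂ, and define f_0(z) = z, f_1(z) = f(z), f_{n+2}(z) = f_{n+1}(z)·f_n(z) + c. Then there exists R > 1 such that the set K_c = {z ∈ ℂ : sup_n |f_n(z)| < ∞} equals the intersection over all n ≥ 0 of the preimages f_n⁻¹(closed disk of radius R centered at 0). In particular K_c is compact. -/

import Mathlib

open Filter

private lemma stmt2_arith1 (D : ℝ) (hD : 14 ≤ D) : 196 ≤ D*D := by nlinarith

private lemma stmt2_arith2 (D E : ℝ) (hD : 14 ≤ D) (hE : 196*(D*D) ≤ E) : 2*D + 4 ≤ E := by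
  nlinarith

private lemma stmt2_arith3 (D : ℝ) (hD : 14 ≤ D) : D + 2 ≤ D*D := by nlinarith

private lemma stmt2_arith4 (D E : ℝ) (hD : 14 ≤ D) (hE : 196*(D*D) ≤ E) : D*D + D ≤ E := by
  nlinarith

private lemma stmt2_growstep (x B C : ℝ) (hx : 1 ≤ x) (hC : 0 ≤ C) (hB : B = C + 2) :
    (2*x)*B + C ≤ (x*B)*B := by
  have h1 : (1:ℝ) ≤ x*B := by nlinarith
  have h2 : C ≤ C*(x*B) := le_mul_of_one_le_right hC h1
  nlinarith

private lemma stmt2_key (D E Q C : ℝ) (hD : 14 ≤ D) (hCD : C ≤ D) (_hC0 : 0 ≤ C)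
    (hE196 : 196*(D*D) ≤ E) (hcon : E - 1 < Q) (hQ0 : 0 ≤ Q)
    (hQ2 : Q*(Q-C) ≤ E*(D*D)) : False := by
  have hE0 : (0:ℝ) ≤ E := by nlinarith
  have hEbig : 2*D + 4 ≤ E := stmt2_arith2 D E hD hE196
  have hQmC : E - 1 - D ≤ Q - C := by linarith
  have hED0 : 0 ≤ E - 1 - D := by linarith
  have h1 : (E-1)*(E-1-D) ≤ Q*(Q-C) := mul_le_mul hcon.le hQmC hED0 hQ0
  have hp1 : 196*(D*D)*E ≤ E*E := by
    have := mul_le_mul_of_nonneg_right hE196 hE0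
    linarith
  have hp2 : E*(D+2) ≤ E*(D*D) := mul_le_mul_of_nonneg_left (stmt2_arith3 D hD) hE0
  nlinarith

set_option maxHeartbeats 1000000 in
theorem stmt2 (f : Polynomial ℂ) (hf : 0 < f.degree) (c : ℂ)
    (fs : ℕ → ℂ → ℂ)
    (h0 : ∀ z, fs 0 z = z) (h1 : ∀ z, fs 1 z = f.eval z)
    (hrec : ∀ n z, fs (n + 2) z = fs (n + 1) z * fs n z + c) :
    ∃ R : ℝ, R > 1 ∧
      ({z : ℂ | BddAbove (Set.range fun n => ‖fs n z‖)} =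
        ⋂ n : ℕ, (fs n) ⁻¹' Metric.closedBall (0 : ℂ) R) ∧
      IsCompact {z : ℂ | BddAbove (Set.range fun n => ‖fs n z‖)} := by
  set C := ‖c‖ with hCdef
  have hC0 : 0 ≤ C := norm_nonneg c
  set B : ℝ := C + 2 with hBdef
  have hB2 : 2 ≤ B := by linarith
  -- triangle inequalities along the recursion
  have up : ∀ n z, ‖fs (n+2) z‖ ≤
      ‖fs (n+1) z‖ * ‖fs n z‖ + C := by
    intro n z
    rw [hrec]
    calc ‖fs (n+1) z * fs n z + c‖
        ≤ ‖fs (n+1) z * fs n z‖ + C := norm_add_le _ _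
      _ = _ := by rw [norm_mul]
  have lowrec : ∀ n z, ‖fs (n+1) z‖ * ‖fs n z‖ - C ≤
      ‖fs (n+2) z‖ := by
    intro n z
    rw [hrec]
    have h := norm_add_le (fs (n+1) z * fs n z + c) (-c)
    simp only [add_neg_cancel_right, norm_neg] at h
    rw [norm_mul] at h
    linarith
  -- escape lemma
  have esc : ∀ z, BddAbove (Set.range fun n => ‖fs n z‖) →
      ∀ n, ¬ (B ≤ ‖fs n z‖ ∧ B ≤ ‖fs (n+1) z‖) := by
    rintro z ⟨W, hW⟩ n ⟨hn, hn1⟩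
    have hWm : ∀ m, ‖fs m z‖ ≤ W := fun m => hW (Set.mem_range_self m)
    have grow : ∀ k, B ≤ ‖fs (n+k) z‖ ∧
        2^k * B ≤ ‖fs (n+k+1) z‖ := by
      intro k
      induction k with
      | zero => simpa using ⟨hn, hn1⟩
      | succ k ih =>
        obtain ⟨ih1, ih2⟩ := ih
        have hpk : (1:ℝ) ≤ 2^k := one_le_pow₀ (by norm_num)
        have hBk : B ≤ 2^k * B := le_mul_of_one_le_left (by linarith) hpk
        refine ⟨le_trans hBk ih2, ?_⟩
        have hlr := lowrec (n+k) z
        have hprod : (2^k * B) * B ≤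
            ‖fs (n+k+1) z‖ * ‖fs (n+k) z‖ :=
          mul_le_mul ih2 ih1 (by linarith) (by positivity)
        have hstep : (2*(2^k))*B + C ≤ ((2^k)*B)*B :=
          stmt2_growstep (2^k) B C hpk hC0 hBdef
        have hpow : (2:ℝ)^(k+1) = 2*(2^k) := by ring
        have h32 : ‖fs (n+k+2) z‖ = ‖fs (n+k+1+1) z‖ := rfl
        have h33 : ‖fs (n+(k+1)+1) z‖ = ‖fs (n+k+1+1) z‖ := rfl
        rw [hpow, h33]
        rw [h32] at hlr
        linarith
    obtain ⟨k, hk⟩ := pow_unbounded_of_one_lt W (by norm_num : (1:ℝ) < 2)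
    have h1' : (2:ℝ)^k ≤ 2^k * B :=
      le_mul_of_one_le_right (by positivity) (by linarith)
    have := (grow k).2
    have := hWm (n+k+1)
    linarith
  -- radius r0 beyond which |f| ≥ B
  have htend : Tendsto (fun z : ℂ => ‖f.eval z‖) (comap norm atTop) atTop :=
    f.tendsto_norm_atTop hf tendsto_comap
  have hev := htend.eventually_ge_atTop B
  rw [Filter.eventually_comap, Filter.eventually_atTop] at hev
  obtain ⟨r1, hr1⟩ := hev
  set r0 : ℝ := max r1 B with hr0def
  have hr0B : B ≤ r0 := le_max_right _ _
  have hr0 : ∀ z : ℂ, r0 ≤ ‖z‖ → B ≤ ‖f.eval z‖ := by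
    intro z hz
    have : B ≤ ‖f.eval z‖ :=
      hr1 ‖z‖ (le_trans (le_max_left _ _) (by exact hz)) z rfl
    exact this
  -- sup of |f| on the closed ball of radius r0
  obtain ⟨M1, hM1⟩ := (isCompact_closedBall (0:ℂ) r0).exists_bound_of_continuousOn
    f.continuous.continuousOn
  have hM1' : ∀ z : ℂ, ‖z‖ ≤ r0 → ‖f.eval z‖ ≤ M1 := by
    intro z hz
    simpa using
      hM1 z (by simpa [Metric.mem_closedBall, Complex.dist_eq] using hz)
  set M : ℝ := max r0 (max M1 B) with hMdef
  have hMr0 : r0 ≤ M := le_max_left _ _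
  have hMM1 : M1 ≤ M := le_trans (le_max_left _ _) (le_max_right _ _)
  have hMB : B ≤ M := le_trans (le_max_right _ _) (le_max_right _ _)
  have hM0 : 0 ≤ M := by linarith
  set D : ℝ := M + B + C + 10 with hDdef
  have hD14 : 14 ≤ D := by linarith
  have hD0 : 0 ≤ D := by linarith
  have hBD : B ≤ D := by linarith
  have hCD : C ≤ D := by linarith
  have hBCD : B + C ≤ D := by linarith
  have hMD : M ≤ D := by linarith
  set E : ℝ := (D*D)*(D*D) with hEdef
  set T : ℝ := E*D with hTdef
  have hDD196 : (196:ℝ) ≤ D*D := stmt2_arith1 D hD14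
  have hE196 : 196*(D*D) ≤ E := by
    rw [hEdef]; exact mul_le_mul_of_nonneg_right hDD196 (by positivity)
  have hE0 : 0 ≤ E := by rw [hEdef]; positivity
  have hE1 : 1 ≤ E := by linarith
  have hDT : D ≤ T := by
    rw [hTdef]; exact le_mul_of_one_le_left hD0 hE1
  have hET : E ≤ T := by
    rw [hTdef]; exact le_mul_of_one_le_right hE0 (by linarith)
  have hMT : M ≤ T := le_trans hMD hDT
  have hBT : B ≤ T := le_trans hBD hDT
  have hT1 : 1 < T := by linarith
  have hT0 : 0 ≤ T := by linarith
  have hDDE : D*D + D ≤ E := stmt2_arith4 D E hD14 hE196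
  have hMMDD : M*M ≤ D*D := mul_le_mul hMD hMD hM0 hD0
  have hBMDD : B*M ≤ D*D := mul_le_mul hBD hMD hM0 hD0
  -- main uniform bound
  have main : ∀ z, BddAbove (Set.range fun n => ‖fs n z‖) →
      ∀ n, ‖fs n z‖ ≤ T := by
    intro z hz
    have hesc := esc z hz
    have hz0' : ‖z‖ ≤ r0 := by
      by_contra h
      push_neg at h
      refine hesc 0 ⟨?_, ?_⟩
      · rw [h0]; linarith
      · rw [h1]; exact hr0 z h.le
    have hz0 : ‖fs 0 z‖ ≤ M := by rw [h0]; linarith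
    have hz1 : ‖fs 1 z‖ ≤ M := by
      rw [h1]; exact le_trans (hM1' z hz0') hMM1
    intro n
    induction n using Nat.strong_induction_on with
    | _ n ih =>
      match n, ih with
      | 0, _ => exact le_trans hz0 hMT
      | 1, _ => exact le_trans hz1 hMT
      | 2, _ =>
        have h02 := up 0 z
        simp only [show (0+2:ℕ) = 2 from rfl, show (0+1:ℕ) = 1 from rfl] at h02
        have habs0 : 0 ≤ ‖fs 0 z‖ := norm_nonneg _
        have hM2 : ‖fs 1 z‖ * ‖fs 0 z‖ ≤ M * M :=
          mul_le_mul hz1 hz0 habs0 hM0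
        linarith
      | 3, _ =>
        by_cases hP : B ≤ ‖fs 2 z‖
        · have h3 := hesc 2
          push_neg at h3
          have h3' := h3 hP
          simp only [show (2+1:ℕ) = 3 from rfl] at h3'
          linarith
        · push_neg at hP
          have h13 := up 1 z
          simp only [show (1+2:ℕ) = 3 from rfl, show (1+1:ℕ) = 2 from rfl] at h13
          have habs1 : 0 ≤ ‖fs 1 z‖ := norm_nonneg _
          have hBM : ‖fs 2 z‖ * ‖fs 1 z‖ ≤ B * M :=
            mul_le_mul hP.le hz1 habs1 (by linarith)
          linarith
      | (j+4), ih =>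
        have hP0 : 0 ≤ ‖fs (j+3) z‖ := norm_nonneg _
        have hQ0 : 0 ≤ ‖fs (j+2) z‖ := norm_nonneg _
        set P := ‖fs (j+3) z‖ with hPdef
        set Q := ‖fs (j+2) z‖ with hQdef
        by_cases hP : B ≤ P
        · have h4 := hesc (j+3)
          push_neg at h4
          have h4' := h4 hP
          have hix : ‖fs (j+3+1) z‖ = ‖fs (j+4) z‖ := rfl
          rw [hix] at h4'
          linarith
        · push_neg at hP
          have hup := up (j+2) z
          have hix1 : ‖fs (j+2+2) z‖ = ‖fs (j+4) z‖ := rfl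
          have hix2 : ‖fs (j+2+1) z‖ = ‖fs (j+3) z‖ := rfl
          rw [hix1, hix2] at hup
          by_cases hQ : B ≤ Q
          · -- hard case
            have hα := lowrec (j+1) z
            have hix3 : ‖fs (j+1+1) z‖ = ‖fs (j+2) z‖ := rfl
            have hix4 : ‖fs (j+1+2) z‖ = ‖fs (j+3) z‖ := rfl
            rw [hix3, hix4] at hα
            have hβ := up j z
            have hIH : ‖fs j z‖ ≤ T := ih j (by omega)
            have habsj1 : 0 ≤ ‖fs (j+1) z‖ := norm_nonneg _
            have h1' : Q - C ≤ ‖fs (j+1) z‖ * T := by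
              have := mul_le_mul_of_nonneg_left hIH habsj1
              linarith
            have hQA : Q * ‖fs (j+1) z‖ ≤ B + C := by linarith
            have hQ2 : Q * (Q - C) ≤ (B + C) * T := by
              calc Q * (Q - C) ≤ Q * (‖fs (j+1) z‖ * T) :=
                    mul_le_mul_of_nonneg_left h1' hQ0
                _ = (Q * ‖fs (j+1) z‖) * T := by ring
                _ ≤ (B + C) * T := mul_le_mul_of_nonneg_right hQA hT0
            have hQ2' : Q * (Q - C) ≤ E*(D*D) := by
              have ha : (B+C)*T ≤ D*T := mul_le_mul_of_nonneg_right hBCD hT0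
              have hb : D*T = E*(D*D) := by rw [hTdef]; ring
              linarith
            have hQsmall : Q ≤ E - 1 := by
              by_contra hcon
              push_neg at hcon
              exact stmt2_key D E Q C hD14 hCD hC0 hE196 hcon hQ0 hQ2'
            have hPQ : P * Q ≤ B * Q := mul_le_mul_of_nonneg_right hP.le hQ0
            have hBQ : B * Q ≤ D * (E - 1) := by
              have ha : B * Q ≤ D * Q := mul_le_mul_of_nonneg_right hBD hQ0
              have hb : D * Q ≤ D * (E - 1) := mul_le_mul_of_nonneg_left hQsmall hD0
              linarith
            have hc : D * (E-1) = D*E - D := by ring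
            have hd : T = D*E := by rw [hTdef]; ring
            linarith
          · push_neg at hQ
            have hPQ : P * Q ≤ B * B := mul_le_mul hP.le hQ.le hQ0 (by linarith)
            have hBBE : B*B ≤ D*D := mul_le_mul hBD hBD (by linarith) hD0
            linarith
  -- continuity of each fs n
  have cont : ∀ n, Continuous (fs n) ∧ Continuous (fs (n+1)) := by
    intro n
    induction n with
    | zero =>
      constructor
      · have h : fs 0 = fun z => z := funext h0
        rw [h]; exact continuous_id
      · have h : fs 1 = fun z => f.eval z := funext h1
        rw [h]; exact f.continuous
    | succ n ih =>
      refine ⟨ih.2, ?_⟩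
      have h : fs (n+2) = fun z => fs (n+1) z * fs n z + c := funext (hrec n)
      rw [h]
      exact (ih.2.mul ih.1).add continuous_const
  have heq : {z : ℂ | BddAbove (Set.range fun n => ‖fs n z‖)} =
      ⋂ n : ℕ, (fs n) ⁻¹' Metric.closedBall (0 : ℂ) T := by
    ext z
    simp only [Set.mem_setOf_eq, Set.mem_iInter, Set.mem_preimage, Metric.mem_closedBall,
      Complex.dist_eq, sub_zero]
    constructor
    · intro hz n
      exact main z hz n
    · intro hz
      refine ⟨T, ?_⟩
      rintro y ⟨n, rfl⟩
      exact hz n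
  refine ⟨T, hT1, heq, ?_⟩
  rw [heq]
  have hclosed : IsClosed (⋂ n : ℕ, (fs n) ⁻¹' Metric.closedBall (0 : ℂ) T) :=
    isClosed_iInter fun n => Metric.isClosed_closedBall.preimage (cont n).1
  have hbdd : Bornology.IsBounded (⋂ n : ℕ, (fs n) ⁻¹' Metric.closedBall (0 : ℂ) T) := by
    apply Bornology.IsBounded.subset (Metric.isBounded_closedBall (x := (0:ℂ)) (r := T))
    intro z hz
    have h := Set.mem_iInter.mp hz 0
    simpa [h0] using h
  exact Metric.isCompact_of_isClosed_isBounded hclosed hbdd
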